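/- Let q ∈ ℝ⁴ with q·q > 0, and let x ∈ ℝ⁴ with x·x < 0; set x̂ = x/(−x·x)^{1/2}. Then q·x̂ + ((q·x̂)² + q·q)^{1/2} > 0, and for every index a ∈ {0,1,2,3}: ∂/∂x^a [ log( q·x̂ + ((q·x̂)² + q·q)^{1/2} ) ] = q_a ((q·x)² − (q·q)(x·x))^{-1/2} − (q·x) x_a ((x·x)^{-1}) ((q·x)² − (q·q)(x·x))^{-1/2}, where q_a = η_{ab}q^b and x_a = η_{ab}x^b. -/

import Mathlib

/-!
Statement 12: the gradient identity
`∂/∂x^a log(q·x̂ + ((q·x̂)² + q·q)^{1/2})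
  = q_a ((q·x)² − (q·q)(x·x))^{-1/2} − (q·x) x_a (x·x)^{-1} ((q·x)² − (q·q)(x·x))^{-1/2}`
for timelike `q` and spacelike `x`, with `x̂ = x/(−x·x)^{1/2}`.
-/

open Real

noncomputable section

/-- Minkowski inner product on ℝ⁴ with signature `(+,−,−,−)`. -/
def mink4 (x y : Fin 4 → ℝ) : ℝ := x 0 * y 0 - x 1 * y 1 - x 2 * y 2 - x 3 * y 3

/-- Index lowering: `x_a = η_{ab} x^b`. -/
def low (x : Fin 4 → ℝ) (a : Fin 4) : ℝ := if a = 0 then x 0 else -(x a)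

def mlin (p : Fin 4 → ℝ) : (Fin 4 → ℝ) →L[ℝ] ℝ :=
  p 0 • ContinuousLinearMap.proj 0 - p 1 • ContinuousLinearMap.proj 1 -
    p 2 • ContinuousLinearMap.proj 2 - p 3 • ContinuousLinearMap.proj 3

lemma mlin_apply (p v : Fin 4 → ℝ) : mlin p v = mink4 p v := by
  simp [mlin, mink4]

lemma mlin_single (p : Fin 4 → ℝ) (a : Fin 4) : mlin p (Pi.single a 1) = low p a := by
  fin_cases a <;> simp [mlin, low, Pi.single_apply]

lemma hasFDerivAt_mlin (p z : Fin 4 → ℝ) :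
    HasFDerivAt (fun y : Fin 4 → ℝ => mink4 p y) (mlin p) z := by
  exact ((((ContinuousLinearMap.proj 0 : (Fin 4 → ℝ) →L[ℝ] ℝ).hasFDerivAt.const_mul (p 0)).sub
      ((ContinuousLinearMap.proj 1 : (Fin 4 → ℝ) →L[ℝ] ℝ).hasFDerivAt.const_mul (p 1))).sub
      ((ContinuousLinearMap.proj 2 : (Fin 4 → ℝ) →L[ℝ] ℝ).hasFDerivAt.const_mul (p 2))).sub
      ((ContinuousLinearMap.proj 3 : (Fin 4 → ℝ) →L[ℝ] ℝ).hasFDerivAt.const_mul (p 3))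

lemma hasFDerivAt_mself (z : Fin 4 → ℝ) :
    HasFDerivAt (fun y : Fin 4 → ℝ => mink4 y y) ((2:ℝ) • mlin z) z := by
  have h : HasFDerivAt (fun y : Fin 4 → ℝ => mink4 y y)
      (((z 0 • (ContinuousLinearMap.proj 0 : (Fin 4 → ℝ) →L[ℝ] ℝ) +
          z 0 • (ContinuousLinearMap.proj 0 : (Fin 4 → ℝ) →L[ℝ] ℝ)) -
        (z 1 • (ContinuousLinearMap.proj 1 : (Fin 4 → ℝ) →L[ℝ] ℝ) +
          z 1 • (ContinuousLinearMap.proj 1 : (Fin 4 → ℝ) →L[ℝ] ℝ))) -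
        (z 2 • (ContinuousLinearMap.proj 2 : (Fin 4 → ℝ) →L[ℝ] ℝ) +
          z 2 • (ContinuousLinearMap.proj 2 : (Fin 4 → ℝ) →L[ℝ] ℝ)) -
        (z 3 • (ContinuousLinearMap.proj 3 : (Fin 4 → ℝ) →L[ℝ] ℝ) +
          z 3 • (ContinuousLinearMap.proj 3 : (Fin 4 → ℝ) →L[ℝ] ℝ))) z := by
    exact ((((ContinuousLinearMap.proj 0 : (Fin 4 → ℝ) →L[ℝ] ℝ).hasFDerivAt.mul
      (ContinuousLinearMap.proj 0 : (Fin 4 → ℝ) →L[ℝ] ℝ).hasFDerivAt).sub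
      ((ContinuousLinearMap.proj 1 : (Fin 4 → ℝ) →L[ℝ] ℝ).hasFDerivAt.mul
      (ContinuousLinearMap.proj 1 : (Fin 4 → ℝ) →L[ℝ] ℝ).hasFDerivAt)).sub
      ((ContinuousLinearMap.proj 2 : (Fin 4 → ℝ) →L[ℝ] ℝ).hasFDerivAt.mul
      (ContinuousLinearMap.proj 2 : (Fin 4 → ℝ) →L[ℝ] ℝ).hasFDerivAt)).sub
      ((ContinuousLinearMap.proj 3 : (Fin 4 → ℝ) →L[ℝ] ℝ).hasFDerivAt.mul
      (ContinuousLinearMap.proj 3 : (Fin 4 → ℝ) →L[ℝ] ℝ).hasFDerivAt)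
  refine h.congr_fderiv ?_
  ext v
  simp [mlin]
  ring

theorem log_gradient_identity (q x : Fin 4 → ℝ)
    (hq : 0 < mink4 q q) (hx : mink4 x x < 0) :
    (0 < mink4 q ((Real.sqrt (-(mink4 x x)))⁻¹ • x) +
        Real.sqrt ((mink4 q ((Real.sqrt (-(mink4 x x)))⁻¹ • x)) ^ 2 + mink4 q q)) ∧
    ∀ a : Fin 4,
      fderiv ℝ
          (fun y : Fin 4 → ℝ =>
            Real.log (mink4 q ((Real.sqrt (-(mink4 y y)))⁻¹ • y) +
              Real.sqrt ((mink4 q ((Real.sqrt (-(mink4 y y)))⁻¹ • y)) ^ 2 + mink4 q q)))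
          x (Pi.single a 1) =
        low q a * ((mink4 q x) ^ 2 - mink4 q q * mink4 x x) ^ (-(1 : ℝ) / 2) -
          mink4 q x * low x a * (mink4 x x)⁻¹ *
            ((mink4 q x) ^ 2 - mink4 q q * mink4 x x) ^ (-(1 : ℝ) / 2) := by
  have hmsmul : ∀ (r : ℝ) (y : Fin 4 → ℝ), mink4 q (r • y) = r * mink4 q y := by
    intro r y; simp [mink4]; ring
  have hgpos : ∀ g c : ℝ, 0 < c → 0 < g + Real.sqrt (g ^ 2 + c) := by
    intro g c hc
    have h1 : Real.sqrt (g ^ 2) < Real.sqrt (g ^ 2 + c) :=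
      Real.sqrt_lt_sqrt (sq_nonneg g) (by linarith)
    rw [Real.sqrt_sq_eq_abs] at h1
    have h2 := neg_abs_le g
    linarith
  refine ⟨hgpos _ _ hq, ?_⟩
  intro a
  have hB : (0:ℝ) < -(mink4 x x) := by linarith
  have hsB : 0 < Real.sqrt (-(mink4 x x)) := Real.sqrt_pos.mpr hB
  have hD : (0:ℝ) < (mink4 q x) ^ 2 - mink4 q q * mink4 x x := by
    nlinarith [sq_nonneg (mink4 q x)]
  have hsD : 0 < Real.sqrt ((mink4 q x) ^ 2 - mink4 q q * mink4 x x) := Real.sqrt_pos.mpr hD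
  have hu : HasFDerivAt (fun y : Fin 4 → ℝ => mink4 q y) (mlin q) x := hasFDerivAt_mlin q x
  have hn : HasFDerivAt (fun y : Fin 4 → ℝ => mink4 y y) ((2:ℝ) • mlin x) x :=
    hasFDerivAt_mself x
  have hsq := (hn.neg.sqrt (ne_of_gt hB))
  have hinv := (hasDerivAt_inv (ne_of_gt hsB)).comp_hasFDerivAt x hsq
  have hg := hinv.mul hu
  have hg2 := (hg.mul hg).add_const (mink4 q q)
  have hpos2 : (0:ℝ) <
      ((Real.sqrt (-(mink4 x x)))⁻¹ * mink4 q x) * ((Real.sqrt (-(mink4 x x)))⁻¹ * mink4 q x) +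
        mink4 q q := by nlinarith [mul_self_nonneg ((Real.sqrt (-(mink4 x x)))⁻¹ * mink4 q x)]
  have hs := hg2.sqrt (ne_of_gt hpos2)
  have hsum := hg.add hs
  have hpos : (0:ℝ) < (Real.sqrt (-(mink4 x x)))⁻¹ * mink4 q x +
      Real.sqrt (((Real.sqrt (-(mink4 x x)))⁻¹ * mink4 q x) *
        ((Real.sqrt (-(mink4 x x)))⁻¹ * mink4 q x) + mink4 q q) := by
    have := hgpos ((Real.sqrt (-(mink4 x x)))⁻¹ * mink4 q x) (mink4 q q) hq
    rw [pow_two] at this; exact this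
  have hlog := hsum.log (ne_of_gt hpos)
  -- key sqrt identity
  have hs_eq : Real.sqrt (((Real.sqrt (-(mink4 x x)))⁻¹ * mink4 q x) *
      ((Real.sqrt (-(mink4 x x)))⁻¹ * mink4 q x) + mink4 q q) =
      Real.sqrt ((mink4 q x) ^ 2 - mink4 q q * mink4 x x) / Real.sqrt (-(mink4 x x)) := by
    rw [← Real.sqrt_div hD.le]
    congr 1
    have h2 : Real.sqrt (-(mink4 x x)) ^ 2 = -(mink4 x x) := Real.sq_sqrt hB.le
    rw [eq_div_iff (by positivity : -(mink4 x x) ≠ 0)]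
    generalize hsb : Real.sqrt (-(mink4 x x)) = sb at h2 ⊢
    have hsbne : sb ≠ 0 := by nlinarith
    have hmx : mink4 x x = -(sb ^ 2) := by linarith
    rw [hmx]
    field_simp
    ring
  have hF : HasFDerivAt (fun y : Fin 4 → ℝ =>
      Real.log ((Real.sqrt (-(mink4 y y)))⁻¹ * mink4 q y +
        Real.sqrt (((Real.sqrt (-(mink4 y y)))⁻¹ * mink4 q y) *
          ((Real.sqrt (-(mink4 y y)))⁻¹ * mink4 q y) + mink4 q q)))
      ((Real.sqrt ((mink4 q x) ^ 2 - mink4 q q * mink4 x x))⁻¹ • mlin q +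
        (mink4 q x / ((-(mink4 x x)) * Real.sqrt ((mink4 q x) ^ 2 - mink4 q q * mink4 x x))) •
          mlin x) x := by
    refine hlog.congr_fderiv ?_
    ext v
    simp only [ContinuousLinearMap.add_apply, ContinuousLinearMap.coe_smul', Pi.smul_apply,
      ContinuousLinearMap.neg_apply, ContinuousLinearMap.coe_sub', Pi.sub_apply,
      Function.comp_apply, smul_eq_mul, ContinuousLinearMap.smul_apply,
      Pi.mul_apply, Pi.add_apply, Pi.neg_apply]
    rw [hs_eq] at hpos ⊢
    have h2 : Real.sqrt (-(mink4 x x)) ^ 2 = -(mink4 x x) := Real.sq_sqrt hB.le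
    generalize hsb : Real.sqrt (-(mink4 x x)) = sb at h2 hsB hpos ⊢
    generalize hsd : Real.sqrt ((mink4 q x) ^ 2 - mink4 q q * mink4 x x) = sd at hsD hpos ⊢
    have hsbne : sb ≠ 0 := ne_of_gt hsB
    have hsdne : sd ≠ 0 := ne_of_gt hsD
    have hApos : 0 < mink4 q x + sd := by
      have h3 := mul_pos hpos hsB
      field_simp at h3
      linarith
    have hden : sb⁻¹ * mink4 q x + sd / sb = (mink4 q x + sd) / sb := by
      field_simp
    rw [hden]
    have hmx : mink4 x x = -(sb ^ 2) := by linarith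
    rw [hmx]
    field_simp
    ring
  rw [show (fun y : Fin 4 → ℝ =>
      Real.log (mink4 q ((Real.sqrt (-(mink4 y y)))⁻¹ • y) +
        Real.sqrt ((mink4 q ((Real.sqrt (-(mink4 y y)))⁻¹ • y)) ^ 2 + mink4 q q))) =
      (fun y : Fin 4 → ℝ =>
      Real.log ((Real.sqrt (-(mink4 y y)))⁻¹ * mink4 q y +
        Real.sqrt (((Real.sqrt (-(mink4 y y)))⁻¹ * mink4 q y) *
          ((Real.sqrt (-(mink4 y y)))⁻¹ * mink4 q y) + mink4 q q))) from by
    funext y; rw [hmsmul, pow_two]]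
  rw [hF.fderiv]
  simp only [ContinuousLinearMap.add_apply, ContinuousLinearMap.coe_smul', Pi.smul_apply,
    smul_eq_mul, mlin_single]
  have hrpow : ((mink4 q x) ^ 2 - mink4 q q * mink4 x x) ^ (-(1:ℝ) / 2) =
      (Real.sqrt ((mink4 q x) ^ 2 - mink4 q q * mink4 x x))⁻¹ := by
    rw [neg_div, Real.rpow_neg hD.le, ← Real.sqrt_eq_rpow]
  rw [hrpow]
  have hxx : mink4 x x ≠ 0 := ne_of_lt hx
  field_simp
  ring

end
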